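/- Every k-shifted Hankel matrix of Catalan numbers H with entries H_{i,j} = Catalan(i+j+k) for 0 ≤ i, j < n is nonsingular; in fact its determinant is a positive integer for all k ≥ 0 and n ≥ 1. -/

import Mathlib

namespace CatalanHankel


/-- `W L h` = number of lattice paths of length `L` with ±1 steps, staying `≥ 0`,
from `0` to `h`. -/
def W : ℕ → ℕ → ℕ
  | 0, 0 => 1
  | 0, _ + 1 => 0
  | L + 1, 0 => W L 1
  | L + 1, h + 1 => W L h + W L (h + 2)

lemma W_eq_zero : ∀ L h, L < h → W L h = 0 := by
  intro L
  induction L with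
  | zero => intro h hh; match h, hh with | (m+1), _ => rfl
  | succ L ih =>
    intro h hh
    match h, hh with
    | (m+1), hh =>
      show W L m + W L (m+2) = 0
      rw [ih m (by omega), ih (m+2) (by omega)]

lemma W_self : ∀ L, W L L = 1 := by
  intro L
  induction L with
  | zero => rfl
  | succ L ih =>
    show W L L + W L (L+2) = 1
    rw [ih, W_eq_zero L (L+2) (by omega)]

open Finset in
lemma expand (a b T : ℕ) (ha : a ≤ T) :
    ∑ h ∈ range (T+1), W (a+1) h * W b h
      = ∑ h ∈ range T, W a (h+1) * W b h + ∑ h ∈ range T, W a h * W b (h+1) := by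
  rw [Finset.sum_range_succ']
  show (∑ h ∈ range T, (W a h + W a (h+2)) * W b (h+1)) + W a 1 * W b 0 = _
  have h1 : ∑ h ∈ range T, (W a h + W a (h+2)) * W b (h+1)
      = ∑ h ∈ range T, W a (h+2) * W b (h+1) + ∑ h ∈ range T, W a h * W b (h+1) := by
    rw [← Finset.sum_add_distrib]
    congr 1; ext h; ring
  rw [h1]
  have h2 : (∑ h ∈ range T, W a (h+2) * W b (h+1)) + W a 1 * W b 0
      = ∑ h ∈ range (T+1), W a (h+1) * W b h := (Finset.sum_range_succ' (fun h => W a (h+1) * W b h) T).symm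
  have h3 : ∑ h ∈ range (T+1), W a (h+1) * W b h
      = ∑ h ∈ range T, W a (h+1) * W b h := by
    rw [Finset.sum_range_succ, W_eq_zero a (T+1) (by omega), zero_mul, add_zero]
  omega

open Finset in
lemma transfer (a b T : ℕ) (ha : a ≤ T) (hb : b ≤ T) :
    ∑ h ∈ range (T+1), W (a+1) h * W b h = ∑ h ∈ range (T+1), W a h * W (b+1) h := by
  rw [expand a b T ha]
  have := expand b a T hb
  have hc : ∑ h ∈ range (T+1), W a h * W (b+1) h
      = ∑ h ∈ range (T+1), W (b+1) h * W a h := by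
    congr 1; ext h; ring
  rw [hc, this]
  have h1 : ∑ h ∈ range T, W b (h+1) * W a h = ∑ h ∈ range T, W a h * W b (h+1) := by
    congr 1; ext h; ring
  have h2 : ∑ h ∈ range T, W b h * W a (h+1) = ∑ h ∈ range T, W a (h+1) * W b h := by
    congr 1; ext h; ring
  omega

open Finset in
lemma cut : ∀ b a T, a + b ≤ T →
    ∑ h ∈ range (T+1), W a h * W b h = W (a+b) 0 := by
  intro b
  induction b with
  | zero =>
    intro a T hT
    rw [Finset.sum_eq_single 0]
    · show W a 0 * W 0 0 = W (a+0) 0; rw [W_self 0]; ring_nf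
    · intro h _ hh
      match h, hh with
      | (m+1), _ => rw [W_eq_zero 0 (m+1) (by omega), mul_zero]
    · intro hmem; exact absurd (Finset.mem_range.mpr (by omega)) hmem
  | succ b ih =>
    intro a T hT
    rw [← transfer a b T (by omega) (by omega), ih (a+1) T (by omega)]
    congr 1
    omega

lemma W_cast : ∀ L h, (W L h : ℤ) =
    if (L + h) % 2 = 0 then (Nat.choose L ((L+h)/2) : ℤ) - Nat.choose L ((L+h)/2 + 1) else 0 := by
  intro L
  induction L with
  | zero =>
    intro h
    match h with
    | 0 => simp [W]
    | m + 1 =>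
      show ((0:ℕ) : ℤ) = _
      by_cases hp : (0 + (m+1)) % 2 = 0
      · rw [if_pos hp]
        rw [Nat.choose_eq_zero_of_lt (by omega), Nat.choose_eq_zero_of_lt (by omega)]
        simp
      · rw [if_neg hp]; simp
  | succ L ih =>
    intro h
    match h with
    | 0 =>
      show ((W L 1 : ℕ) : ℤ) = _
      rw [ih 1]
      rcases Nat.even_or_odd L with ⟨t, ht⟩ | ⟨t, ht⟩
      · subst ht
        rw [if_neg (by omega), if_neg (by omega)]
      · subst ht
        rw [if_pos (by omega), if_pos (by omega)]
        have e1 : (2*t+1+1)/2 = t+1 := by omega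
        rw [e1]
        have p1 : Nat.choose (2*t+2) (t+1) = Nat.choose (2*t+1) t + Nat.choose (2*t+1) (t+1) := by
          have := Nat.choose_succ_succ (2*t+1) t
          convert this using 2 <;> omega
        have p2 : Nat.choose (2*t+2) (t+2) = Nat.choose (2*t+1) (t+1) + Nat.choose (2*t+1) (t+2) := by
          have := Nat.choose_succ_succ (2*t+1) (t+1)
          convert this using 2 <;> omega
        have psym : Nat.choose (2*t+1) t = Nat.choose (2*t+1) (t+1) := by
          have := Nat.choose_symm (n := 2*t+1) (k := t) (by omega)
          have e : 2*t+1-t = t+1 := by omega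
          rw [e] at this
          omega
        have g1 : (2*t+1+1) = 2*t+2 := by omega
        rw [g1]
        rw [show t+1+1 = t+2 from rfl] 
        rw [p1, p2, psym]
        push_cast
        ring
    | m + 1 =>
      show ((W L m + W L (m+2) : ℕ) : ℤ) = _
      push_cast
      rw [ih m, ih (m+2)]
      by_cases hp : (L + m) % 2 = 0
      · rw [if_pos hp, if_pos (by omega), if_pos (by omega)]
        set u := (L + m)/2 with hu
        have e1 : (L + (m+2))/2 = u + 1 := by omega
        have e2 : (L + 1 + (m+1))/2 = u + 1 := by omega
        rw [e1, e2]
        have p1 : Nat.choose (L+1) (u+1) = Nat.choose L u + Nat.choose L (u+1) :=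
          Nat.choose_succ_succ L u
        have p2 : Nat.choose (L+1) (u+2) = Nat.choose L (u+1) + Nat.choose L (u+2) :=
          Nat.choose_succ_succ L (u+1)
        rw [p1, p2]
        push_cast
        ring
      · rw [if_neg (by omega), if_neg (by omega), if_neg (by omega)]
        ring

lemma W_two_mul (M : ℕ) : W (2*M) 0 = catalan M := by
  have h := W_cast (2*M) 0
  rw [if_pos (by omega)] at h
  have e : (2*M+0)/2 = M := by omega
  rw [e] at h
  have hcb : (M+1) * catalan M = Nat.choose (2*M) M := by
    have := succ_mul_catalan_eq_centralBinom M
    rwa [Nat.centralBinom] at this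
  have hcr : Nat.choose (2*M) (M+1) * (M+1) = Nat.choose (2*M) M * M := by
    have := Nat.choose_succ_right_eq (2*M) M
    have e2 : 2*M - M = M := by omega
    rwa [e2] at this
  have key : ((M:ℤ)+1) * (W (2*M) 0 : ℤ) = ((M:ℤ)+1) * (catalan M : ℤ) := by
    rw [h]
    have h1 : ((Nat.choose (2*M) (M+1) : ℤ)) * ((M:ℤ)+1) = (Nat.choose (2*M) M : ℤ) * M := by
      exact_mod_cast congrArg (Nat.cast : ℕ → ℤ) hcr
    have h2 : ((M:ℤ)+1) * (catalan M : ℤ) = (Nat.choose (2*M) M : ℤ) := by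
      exact_mod_cast congrArg (Nat.cast : ℕ → ℤ) hcb
    nlinarith [h1, h2]
  have := mul_left_cancel₀ (a := (M:ℤ)+1) (by positivity) key
  exact_mod_cast this

open Matrix Finset

theorem main' (n k : ℕ) (hn : 1 ≤ n) :
    0 < Matrix.det (fun i j : Fin n => (catalan ((i : ℕ) + (j : ℕ) + k) : ℤ)) := by
  set T := 4*n + 2*k with hT
  set A : Matrix (Fin n) (Fin (T+1)) ℝ := fun i h => (W (2*(i:ℕ)+k) (h:ℕ) : ℝ) with hA
  set H : Matrix (Fin n) (Fin n) ℝ := fun i j => (catalan ((i:ℕ)+(j:ℕ)+k) : ℝ) with hH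
  have hHA : H = A * Aᵀ := by
    ext i j
    have key : ∑ h ∈ range (T+1), W (2*(i:ℕ)+k) h * W (2*(j:ℕ)+k) h
        = catalan ((i:ℕ)+(j:ℕ)+k) := by
      rw [cut _ _ _ (by omega), show 2*(i:ℕ)+k+(2*(j:ℕ)+k) = 2*((i:ℕ)+(j:ℕ)+k) by ring,
        W_two_mul]
    have : (A * Aᵀ) i j
        = ∑ h : Fin (T+1), ((W (2*(i:ℕ)+k) (h:ℕ) * W (2*(j:ℕ)+k) (h:ℕ) : ℕ) : ℝ) := by
      rw [Matrix.mul_apply]; push_cast; rfl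
    rw [this, Fin.sum_univ_eq_sum_range (fun h => ((W (2*(i:ℕ)+k) h * W (2*(j:ℕ)+k) h : ℕ) : ℝ)),
      ← Nat.cast_sum, key]
  -- triangular submatrix
  set B : Matrix (Fin n) (Fin n) ℝ := fun i j => (W (2*(i:ℕ)+k) (2*(j:ℕ)+k) : ℝ) with hB
  have hBtri : B.BlockTriangular OrderDual.toDual := by
    intro i j hij
    have : (i:ℕ) < (j:ℕ) := hij
    simp only [hB]
    rw [W_eq_zero _ _ (by omega)]
    norm_num
  have hBdet : B.det = 1 := by
    rw [Matrix.det_of_lowerTriangular B hBtri]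
    apply Finset.prod_eq_one
    intro i _
    simp only [hB]
    rw [W_self]
    norm_num
  have hBunit : IsUnit B := (Matrix.isUnit_iff_isUnit_det B).mpr (by rw [hBdet]; exact isUnit_one)
  have hBinj : Function.Injective (fun x : Fin n → ℝ => x ᵥ* B) :=
    Matrix.vecMul_injective_iff_isUnit.mpr hBunit
  -- positive definiteness
  have hPD : H.PosDef := by
    rw [Matrix.posDef_iff_dotProduct_mulVec]
    constructor
    · ext i j
      show star (H j i) = H i j
      simp only [hH, star_trivial]
      norm_cast
      rw [show (j:ℕ)+(i:ℕ)+k = (i:ℕ)+(j:ℕ)+k by ring]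
    · intro x hx
      rw [star_trivial, hHA, ← Matrix.mulVec_mulVec, dotProduct_mulVec,
        Matrix.mulVec_transpose]
      set y := x ᵥ* A with hy
      have hyne : y ≠ 0 := by
        intro hy0
        apply hx
        apply hBinj
        show x ᵥ* B = 0 ᵥ* B
        rw [Matrix.zero_vecMul]
        ext j
        have emb : Fin (T+1) := ⟨2*(j:ℕ)+k, by omega⟩
        have := congrFun hy0 ⟨2*(j:ℕ)+k, by omega⟩
        simpa [hy, Matrix.vecMul, dotProduct, hA, hB] using this
      have : 0 < y ⬝ᵥ y := by
        obtain ⟨h0, hh0⟩ := Function.ne_iff.mp hyne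
        apply Finset.sum_pos' (fun h _ => mul_self_nonneg (y h))
        exact ⟨h0, Finset.mem_univ _, mul_self_pos.mpr hh0⟩
      exact this
  have hdet : 0 < H.det := hPD.det_pos
  -- transfer to ℤ
  set Hz : Matrix (Fin n) (Fin n) ℤ := fun i j => (catalan ((i : ℕ) + (j : ℕ) + k) : ℤ) with hHz
  have hcast : H = Hz.map (Int.castRingHom ℝ) := by
    ext i j
    show ((catalan ((i:ℕ)+(j:ℕ)+k) : ℕ) : ℝ) = ((catalan ((i:ℕ)+(j:ℕ)+k) : ℤ) : ℝ)
    exact (Int.cast_natCast _).symm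
  rw [hcast, ← RingHom.mapMatrix_apply, ← RingHom.map_det] at hdet
  simp only [eq_intCast] at hdet
  exact_mod_cast hdet


end CatalanHankel


/-- Every `k`-shifted Hankel matrix of Catalan numbers, with entries
`H_{i,j} = catalan (i+j+k)` for `0 ≤ i, j < n`, has positive determinant
(in particular it is nonsingular), for all `k ≥ 0` and `n ≥ 1`. -/
theorem catalan_hankel_det_pos (n k : ℕ) (hn : 1 ≤ n) :
    0 < Matrix.det (fun i j : Fin n => (catalan ((i : ℕ) + (j : ℕ) + k) : ℤ)) :=
  CatalanHankel.main' n k hn
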